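/- Let 0 < σ < 1, β ∈ ℝ, 0 < ε < 1, and let f_ε be the regularization of f(ρ) = β ρ^σ as above. Then there is a constant C₃ depending only on σ and β such that |f_ε'(ρ)| + |ρ f_ε''(ρ)| + |ρ² f_ε'''(ρ)| ≤ C₃ / ε^{2-2σ} for all ρ ≥ 0. -/

import Mathlib

/-- Generalized binomial coefficient `binom(x, j) = x(x-1)⋯(x-j+1)/j!`. -/
noncomputable def gbinom (x : ℝ) (j : ℕ) : ℝ :=
  (∏ i ∈ Finset.range j, (x - i)) / (Nat.factorial j)

/-- The cubic polynomial `Q_ε(ρ) = β ε^{2σ-2} Σ_{j=0}^{3} binom(j-σ, j)(1-ρ/ε²)^j`. -/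
noncomputable def Qreg (σ β ε ρ : ℝ) : ℝ :=
  β * ε ^ (2 * σ - 2) *
    ∑ j ∈ Finset.range 4, gbinom ((j : ℝ) - σ) j * (1 - ρ / ε ^ 2) ^ j

/-- The local regularization `f_ε` of `f(ρ) = β ρ^σ`. -/
noncomputable def freg (σ β ε ρ : ℝ) : ℝ :=
  if ε ^ 2 ≤ ρ then β * ρ ^ σ else ρ * Qreg σ β ε ρ

/-! ### Auxiliary definitions -/

noncomputable def cb1 (σ : ℝ) : ℝ := 1 - σ
noncomputable def cb2 (σ : ℝ) : ℝ := (2 - σ) * (1 - σ) / 2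
noncomputable def cb3 (σ : ℝ) : ℝ := (3 - σ) * (2 - σ) * (1 - σ) / 6

noncomputable def PA (σ : ℝ) : ℝ := 1 + cb1 σ + cb2 σ + cb3 σ
noncomputable def PB (σ ε : ℝ) : ℝ := -((cb1 σ + 2 * cb2 σ + 3 * cb3 σ) / ε ^ 2)
noncomputable def PC (σ ε : ℝ) : ℝ := (cb2 σ + 3 * cb3 σ) / ε ^ 4
noncomputable def PD (σ ε : ℝ) : ℝ := -(cb3 σ / ε ^ 6)

noncomputable def P0 (σ β ε ρ : ℝ) : ℝ :=
  β * ε ^ (2 * σ - 2) * (PA σ * ρ + PB σ ε * ρ ^ 2 + PC σ ε * ρ ^ 3 + PD σ ε * ρ ^ 4)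
noncomputable def P1 (σ β ε ρ : ℝ) : ℝ :=
  β * ε ^ (2 * σ - 2) * (PA σ + 2 * PB σ ε * ρ + 3 * PC σ ε * ρ ^ 2 + 4 * PD σ ε * ρ ^ 3)
noncomputable def P2 (σ β ε ρ : ℝ) : ℝ :=
  β * ε ^ (2 * σ - 2) * (2 * PB σ ε + 6 * PC σ ε * ρ + 12 * PD σ ε * ρ ^ 2)
noncomputable def P3 (σ β ε ρ : ℝ) : ℝ :=
  β * ε ^ (2 * σ - 2) * (6 * PC σ ε + 24 * PD σ ε * ρ)

noncomputable def G1 (σ β ρ : ℝ) : ℝ := β * σ * ρ ^ (σ - 1)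
noncomputable def G2 (σ β ρ : ℝ) : ℝ := β * σ * (σ - 1) * ρ ^ (σ - 2)
noncomputable def G3 (σ β ρ : ℝ) : ℝ := β * σ * (σ - 1) * (σ - 2) * ρ ^ (σ - 3)

lemma hQP (σ β ε : ℝ) (hε : ε ≠ 0) (ρ : ℝ) : ρ * Qreg σ β ε ρ = P0 σ β ε ρ := by
  have h2 : (ε:ℝ)^2 ≠ 0 := pow_ne_zero _ hε
  simp only [Qreg, P0, PA, PB, PC, PD, cb1, cb2, cb3, gbinom, Finset.sum_range_succ,
    Finset.prod_range_succ, Finset.prod_range_zero, Nat.factorial]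
  push_cast
  field_simp
  ring

lemma hasDerivAt_quartic (A B C D x : ℝ) :
    HasDerivAt (fun t : ℝ => A * t + B * t ^ 2 + C * t ^ 3 + D * t ^ 4)
      (A + 2 * B * x + 3 * C * x ^ 2 + 4 * D * x ^ 3) x := by
  have h := (((hasDerivAt_id' (𝕜 := ℝ) (x := x)).const_mul A).add
      ((hasDerivAt_pow 2 x).const_mul B)).add
    (((hasDerivAt_pow 3 x).const_mul C).add ((hasDerivAt_pow 4 x).const_mul D))
  convert h using 1
  · rfl
  · rfl
  · funext t; simp only [Pi.add_apply]; ring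
  · push_cast; ring

lemma hasDerivAt_cubic (A B C D x : ℝ) :
    HasDerivAt (fun t : ℝ => A + B * t + C * t ^ 2 + D * t ^ 3)
      (B + 2 * C * x + 3 * D * x ^ 2) x := by
  have h := (((hasDerivAt_const x A).add ((hasDerivAt_id' (𝕜 := ℝ) (x := x)).const_mul B)).add
      ((hasDerivAt_pow 2 x).const_mul C)).add ((hasDerivAt_pow 3 x).const_mul D)
  convert h using 1
  · rfl
  · rfl
  · rfl
  push_cast; ring

lemma hasDerivAt_quadratic (A B C x : ℝ) :
    HasDerivAt (fun t : ℝ => A + B * t + C * t ^ 2) (B + 2 * C * x) x := by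
  have h := ((hasDerivAt_const x A).add ((hasDerivAt_id' (𝕜 := ℝ) (x := x)).const_mul B)).add
      ((hasDerivAt_pow 2 x).const_mul C)
  convert h using 1
  · rfl
  · rfl
  · rfl
  push_cast; ring

lemma hasDerivAt_linear (A B x : ℝ) :
    HasDerivAt (fun t : ℝ => A + B * t) B x := by
  have h := (hasDerivAt_const x A).add ((hasDerivAt_id' (𝕜 := ℝ) (x := x)).const_mul B)
  convert h using 1
  · rfl
  · rfl
  · rfl
  ring

lemma hasDerivAt_P0 (σ β ε x : ℝ) : HasDerivAt (P0 σ β ε) (P1 σ β ε x) x := by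
  have h := (hasDerivAt_quartic (PA σ) (PB σ ε) (PC σ ε) (PD σ ε) x).const_mul
    (β * ε ^ (2 * σ - 2))
  exact h

lemma hasDerivAt_P1 (σ β ε x : ℝ) : HasDerivAt (P1 σ β ε) (P2 σ β ε x) x := by
  have h := (hasDerivAt_cubic (PA σ) (2 * PB σ ε) (3 * PC σ ε) (4 * PD σ ε) x).const_mul
    (β * ε ^ (2 * σ - 2))
  convert h using 1
  · rfl
  · rfl
  · rfl
  simp only [P2]; ring

lemma hasDerivAt_P2 (σ β ε x : ℝ) : HasDerivAt (P2 σ β ε) (P3 σ β ε x) x := by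
  have h := (hasDerivAt_quadratic (2 * PB σ ε) (6 * PC σ ε) (12 * PD σ ε) x).const_mul
    (β * ε ^ (2 * σ - 2))
  convert h using 1
  · rfl
  · rfl
  · rfl
  simp only [P3]; ring

/-- Junction lemma: gluing two functions with matching value and derivative. -/
lemma junction {a b : ℝ → ℝ} {c A : ℝ} (hab : a c = b c)
    (ha : HasDerivAt a A c) (hb : HasDerivAt b A c) :
    HasDerivAt (fun x => if c ≤ x then a x else b x) A c := by
  rw [hasDerivAt_iff_isLittleO] at ha hb ⊢
  rw [Asymptotics.isLittleO_iff] at ha hb ⊢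
  intro C hC
  filter_upwards [ha hC, hb hC] with x hx1 hx2
  by_cases hcx : c ≤ x
  · simpa [hcx] using hx1
  · simp only [hcx, if_neg, if_pos le_rfl, hab]
    exact hx2

lemma rpow_sq_rpow (ε : ℝ) (hε : 0 < ε) (t : ℝ) : (ε ^ 2) ^ t = ε ^ (2 * t) := by
  rw [← Real.rpow_natCast ε 2, ← Real.rpow_mul hε.le]
  norm_num

lemma rpow_shift (ε : ℝ) (hε : 0 < ε) (σ : ℝ) (n : ℕ) :
    ε ^ (2 * σ - 2 : ℝ) = ε ^ (2 * σ - 2 - n : ℝ) * ε ^ n := by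
  rw [← Real.rpow_natCast ε n, ← Real.rpow_add hε]
  ring_nf

section Match
variable {σ β ε : ℝ} (hε : 0 < ε)
include hε

lemma match0 : β * (ε ^ 2) ^ σ = P0 σ β ε (ε ^ 2) := by
  have h2 : (ε:ℝ) ^ 2 ≠ 0 := by positivity
  have e1 : (ε ^ 2 : ℝ) ^ σ = ε ^ (2 * σ - 2 : ℝ) * ε ^ 2 := by
    rw [rpow_sq_rpow ε hε σ, ← Real.rpow_natCast ε 2, ← Real.rpow_add hε]; ring_nf
  simp only [P0, PA, PB, PC, PD, cb1, cb2, cb3, e1]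
  field_simp
  ring

lemma match1 : G1 σ β (ε ^ 2) = P1 σ β ε (ε ^ 2) := by
  have h2 : (ε:ℝ) ^ 2 ≠ 0 := by positivity
  have e1 : (ε ^ 2 : ℝ) ^ (σ - 1) = ε ^ (2 * σ - 2 : ℝ) := by
    rw [rpow_sq_rpow ε hε]; ring_nf
  simp only [G1, P1, PA, PB, PC, PD, cb1, cb2, cb3, e1]
  field_simp
  ring

lemma match2 : G2 σ β (ε ^ 2) = P2 σ β ε (ε ^ 2) := by
  have h2 : (ε:ℝ) ^ 2 ≠ 0 := by positivity
  have e1 : (ε ^ 2 : ℝ) ^ (σ - 2) * ε ^ 2 = ε ^ (2 * σ - 2 : ℝ) := by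
    rw [rpow_sq_rpow ε hε, rpow_shift ε hε σ 2]; ring_nf
  have e2 : (ε ^ 2 : ℝ) ^ (σ - 2) = ε ^ (2 * σ - 2 : ℝ) / ε ^ 2 := by
    rw [← e1]; field_simp
  simp only [G2, P2, PA, PB, PC, PD, cb1, cb2, cb3, e2]
  field_simp
  ring

lemma match3 : G3 σ β (ε ^ 2) = P3 σ β ε (ε ^ 2) := by
  have h2 : (ε:ℝ) ^ 2 ≠ 0 := by positivity
  have h4 : (ε:ℝ) ^ 4 ≠ 0 := by positivity
  have e1 : (ε ^ 2 : ℝ) ^ (σ - 3) * ε ^ 4 = ε ^ (2 * σ - 2 : ℝ) := by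
    rw [rpow_sq_rpow ε hε, rpow_shift ε hε σ 4]; ring_nf
  have e2 : (ε ^ 2 : ℝ) ^ (σ - 3) = ε ^ (2 * σ - 2 : ℝ) / ε ^ 4 := by
    rw [← e1]; field_simp
  simp only [G3, P3, PA, PB, PC, PD, cb1, cb2, cb3, e2]
  field_simp
  ring

end Match

lemma hasDerivAt_g {ρ : ℝ} (σ β : ℝ) (hρ : 0 < ρ) :
    HasDerivAt (fun x : ℝ => β * x ^ σ) (G1 σ β ρ) ρ := by
  have h := (Real.hasDerivAt_rpow_const (x := ρ) (p := σ) (Or.inl hρ.ne')).const_mul β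
  convert h using 1
  · rfl
  · rfl
  simp only [G1]; ring

lemma hasDerivAt_G1 {ρ : ℝ} (σ β : ℝ) (hρ : 0 < ρ) :
    HasDerivAt (G1 σ β) (G2 σ β ρ) ρ := by
  have h := (Real.hasDerivAt_rpow_const (x := ρ) (p := σ - 1) (Or.inl hρ.ne')).const_mul (β * σ)
  convert h using 1
  · rfl
  · rfl
  · rfl
  simp only [G2]
  rw [show σ - 1 - 1 = σ - 2 by ring]
  ring

lemma hasDerivAt_G2 {ρ : ℝ} (σ β : ℝ) (hρ : 0 < ρ) :
    HasDerivAt (G2 σ β) (G3 σ β ρ) ρ := by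
  have h := (Real.hasDerivAt_rpow_const (x := ρ) (p := σ - 2) (Or.inl hρ.ne')).const_mul
    (β * σ * (σ - 1))
  convert h using 1
  · rfl
  · rfl
  · rfl
  simp only [G3]
  rw [show σ - 2 - 1 = σ - 3 by ring]
  ring

lemma hasDerivAt_glue {g p g' p' : ℝ → ℝ} {c : ℝ} (hc : 0 < c)
    (hgp : g c = p c) (hg'p' : g' c = p' c)
    (hg : ∀ x, 0 < x → HasDerivAt g (g' x) x) (hp : ∀ x, HasDerivAt p (p' x) x) (ρ : ℝ) :
    HasDerivAt (fun x => if c ≤ x then g x else p x) (if c ≤ ρ then g' ρ else p' ρ) ρ := by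
  rcases lt_trichotomy ρ c with h | h | h
  · rw [if_neg (not_le.2 h)]
    refine (hp ρ).congr_of_eventuallyEq ?_
    filter_upwards [isOpen_Iio.eventually_mem (by exact h : ρ ∈ Set.Iio c)] with x hx
    rw [if_neg (not_le.2 hx)]
  · subst h
    rw [if_pos le_rfl]
    exact junction hgp (hg ρ hc) (hg'p' ▸ hp ρ)
  · rw [if_pos h.le]
    refine (hg ρ (hc.trans h)).congr_of_eventuallyEq ?_
    filter_upwards [isOpen_Ioi.eventually_mem (by exact h : ρ ∈ Set.Ioi c)] with x hx
    rw [if_pos (le_of_lt hx)]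

noncomputable def F1 (σ β ε ρ : ℝ) : ℝ := if ε ^ 2 ≤ ρ then G1 σ β ρ else P1 σ β ε ρ
noncomputable def F2 (σ β ε ρ : ℝ) : ℝ := if ε ^ 2 ≤ ρ then G2 σ β ρ else P2 σ β ε ρ
noncomputable def F3 (σ β ε ρ : ℝ) : ℝ := if ε ^ 2 ≤ ρ then G3 σ β ρ else P3 σ β ε ρ

section Derivs
variable {σ β ε : ℝ} (hε : 0 < ε)
include hε

lemma hasDerivAt_freg (ρ : ℝ) : HasDerivAt (freg σ β ε) (F1 σ β ε ρ) ρ := by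
  have hs : (0:ℝ) < ε ^ 2 := by positivity
  have hfeq : freg σ β ε = fun x => if ε ^ 2 ≤ x then β * x ^ σ else P0 σ β ε x := by
    funext x
    by_cases h : ε ^ 2 ≤ x <;> simp [freg, h, hQP σ β ε hε.ne']
  rw [hfeq, show F1 σ β ε ρ = if ε ^ 2 ≤ ρ then G1 σ β ρ else P1 σ β ε ρ from rfl]
  exact hasDerivAt_glue hs (match0 hε) (match1 hε) (fun x hx => hasDerivAt_g σ β hx)
    (hasDerivAt_P0 σ β ε) ρ

lemma hasDerivAt_F1 (ρ : ℝ) : HasDerivAt (F1 σ β ε) (F2 σ β ε ρ) ρ := by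
  have hs : (0:ℝ) < ε ^ 2 := by positivity
  exact hasDerivAt_glue hs (match1 hε) (match2 hε) (fun x hx => hasDerivAt_G1 σ β hx)
    (hasDerivAt_P1 σ β ε) ρ

lemma hasDerivAt_F2 (ρ : ℝ) : HasDerivAt (F2 σ β ε) (F3 σ β ε ρ) ρ := by
  have hs : (0:ℝ) < ε ^ 2 := by positivity
  exact hasDerivAt_glue hs (match2 hε) (match3 hε) (fun x hx => hasDerivAt_G2 σ β hx)
    (hasDerivAt_P2 σ β ε) ρ

lemma deriv_freg : deriv (freg σ β ε) = F1 σ β ε :=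
  funext fun ρ => (hasDerivAt_freg hε ρ).deriv

lemma iteratedDeriv_two_freg : iteratedDeriv 2 (freg σ β ε) = F2 σ β ε := by
  funext ρ
  rw [iteratedDeriv_succ, iteratedDeriv_one, deriv_freg hε]
  exact (hasDerivAt_F1 hε ρ).deriv

lemma iteratedDeriv_three_freg : iteratedDeriv 3 (freg σ β ε) = F3 σ β ε := by
  funext ρ
  rw [iteratedDeriv_succ, iteratedDeriv_two_freg hε]
  exact (hasDerivAt_F2 hε ρ).deriv

end Derivs

section Bound
variable {σ β ε : ℝ}

set_option maxHeartbeats 1600000 in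
lemma main_bound (hσ0 : 0 < σ) (hσ1 : σ < 1) (hε : 0 < ε) (ρ : ℝ) (hρ : 0 ≤ ρ) :
    |F1 σ β ε ρ| + |ρ * F2 σ β ε ρ| + |ρ ^ 2 * F3 σ β ε ρ|
      ≤ 128 * (|β| + 1) * ε ^ (2 * σ - 2 : ℝ) := by
  have hεne : ε ≠ 0 := hε.ne'
  have hE : (0:ℝ) < ε ^ (2 * σ - 2 : ℝ) := Real.rpow_pos_of_pos hε _
  have hb : (0:ℝ) ≤ |β| := abs_nonneg β
  by_cases hcase : ε ^ 2 ≤ ρ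
  · -- power region
    have hρ0 : 0 < ρ := lt_of_lt_of_le (by positivity) hcase
    have hR0 : (0:ℝ) ≤ ρ ^ (σ - 1 : ℝ) := Real.rpow_nonneg hρ _
    have hRE : ρ ^ (σ - 1 : ℝ) ≤ ε ^ (2 * σ - 2 : ℝ) := by
      calc ρ ^ (σ - 1 : ℝ) ≤ (ε ^ 2) ^ (σ - 1 : ℝ) :=
            Real.rpow_le_rpow_of_nonpos (by positivity) hcase (by linarith)
        _ = ε ^ (2 * σ - 2 : ℝ) := by rw [rpow_sq_rpow ε hε]; congr 1; ring
    have hF1 : F1 σ β ε ρ = β * σ * ρ ^ (σ - 1 : ℝ) := by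
      rw [F1, if_pos hcase]; rfl
    have hF2 : ρ * F2 σ β ε ρ = β * σ * (σ - 1) * ρ ^ (σ - 1 : ℝ) := by
      rw [F2, if_pos hcase]
      have : ρ ^ (σ - 1 : ℝ) = ρ ^ (σ - 2 : ℝ) * ρ := by
        rw [← Real.rpow_add_one hρ0.ne' (σ - 2)]; congr 1; ring
      rw [this, G2]; ring
    have hF3 : ρ ^ 2 * F3 σ β ε ρ = β * σ * (σ - 1) * (σ - 2) * ρ ^ (σ - 1 : ℝ) := by
      rw [F3, if_pos hcase]
      have : ρ ^ (σ - 1 : ℝ) = ρ ^ (σ - 3 : ℝ) * ρ ^ 2 := by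
        rw [← Real.rpow_natCast ρ 2, ← Real.rpow_add hρ0]; congr 1; push_cast; ring
      rw [this, G3]; ring
    rw [hF1, hF2, hF3]
    have a1 : |β * σ * ρ ^ (σ - 1 : ℝ)| = |β| * σ * ρ ^ (σ - 1 : ℝ) := by
      rw [abs_mul, abs_mul, abs_of_pos hσ0, abs_of_nonneg hR0]
    have a2 : |β * σ * (σ - 1) * ρ ^ (σ - 1 : ℝ)| = |β| * σ * (1 - σ) * ρ ^ (σ - 1 : ℝ) := by
      rw [abs_mul, abs_mul, abs_mul, abs_of_pos hσ0, abs_of_nonneg hR0,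
        abs_of_neg (by linarith : σ - 1 < 0)]; ring
    have a3 : |β * σ * (σ - 1) * (σ - 2) * ρ ^ (σ - 1 : ℝ)|
        = |β| * σ * (1 - σ) * (2 - σ) * ρ ^ (σ - 1 : ℝ) := by
      rw [abs_mul, abs_mul, abs_mul, abs_mul, abs_of_pos hσ0, abs_of_nonneg hR0,
        abs_of_neg (by linarith : σ - 1 < 0), abs_of_neg (by linarith : σ - 2 < 0)]; ring
    rw [a1, a2, a3]
    have t1 : σ * (1 - σ) ≤ 1 / 4 := by nlinarith [sq_nonneg (1 - 2 * σ)]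
    have t2 : σ * (1 - σ) * (2 - σ) ≤ 1 / 2 := by
      nlinarith [mul_nonneg (by linarith : (0:ℝ) ≤ 1 / 4 - σ * (1 - σ))
        (by linarith : (0:ℝ) ≤ 2 - σ)]
    have hfac : σ + σ * (1 - σ) + σ * (1 - σ) * (2 - σ) ≤ 4 := by linarith
    calc |β| * σ * ρ ^ (σ - 1 : ℝ) + |β| * σ * (1 - σ) * ρ ^ (σ - 1 : ℝ)
          + |β| * σ * (1 - σ) * (2 - σ) * ρ ^ (σ - 1 : ℝ)
        = |β| * ρ ^ (σ - 1 : ℝ) * (σ + σ * (1 - σ) + σ * (1 - σ) * (2 - σ)) := by ring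
      _ ≤ |β| * ρ ^ (σ - 1 : ℝ) * 4 := by
          exact mul_le_mul_of_nonneg_left hfac (mul_nonneg hb hR0)
      _ = 4 * |β| * ρ ^ (σ - 1 : ℝ) := by ring
      _ ≤ 4 * |β| * ε ^ (2 * σ - 2 : ℝ) := by
          exact mul_le_mul_of_nonneg_left hRE (by positivity)
      _ ≤ 128 * (|β| + 1) * ε ^ (2 * σ - 2 : ℝ) := by nlinarith [hE.le]
  · -- polynomial region
    have hs2 : (0:ℝ) < ε ^ 2 := by positivity
    obtain ⟨u, hu0, hu1, rfl⟩ : ∃ u, 0 ≤ u ∧ u ≤ 1 ∧ ρ = u * ε ^ 2 := by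
      refine ⟨ρ / ε ^ 2, div_nonneg hρ hs2.le, ?_, by field_simp⟩
      rw [div_le_one hs2]; exact (not_le.1 hcase).le
    have hc1 : 0 ≤ cb1 σ ∧ cb1 σ ≤ 1 := by
      unfold cb1; constructor <;> linarith
    have hc2 : 0 ≤ cb2 σ ∧ cb2 σ ≤ 1 := by
      unfold cb2; constructor <;> nlinarith
    have hc3 : 0 ≤ cb3 σ ∧ cb3 σ ≤ 1 := by
      unfold cb3
      constructor
      · have := mul_nonneg (mul_nonneg (by linarith : (0:ℝ) ≤ 3 - σ)
          (by linarith : (0:ℝ) ≤ 2 - σ)) (by linarith : (0:ℝ) ≤ 1 - σ)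
        linarith
      · nlinarith [mul_pos (by linarith : (0:ℝ) < 3 - σ) (by linarith : (0:ℝ) < 2 - σ),
          sq_nonneg σ, sq_nonneg (1 - σ)]
    have hu2 : u ^ 2 ≤ 1 := pow_le_one₀ hu0 hu1
    have hu3 : u ^ 3 ≤ 1 := pow_le_one₀ hu0 hu1
    have hu2' : (0:ℝ) ≤ u ^ 2 := by positivity
    have hu3' : (0:ℝ) ≤ u ^ 3 := by positivity
    have m1 : 0 ≤ cb1 σ * u ∧ cb1 σ * u ≤ 1 :=
      ⟨mul_nonneg hc1.1 hu0, mul_le_one₀ hc1.2 hu0 hu1⟩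
    have m2 : 0 ≤ cb2 σ * u ∧ cb2 σ * u ≤ 1 :=
      ⟨mul_nonneg hc2.1 hu0, mul_le_one₀ hc2.2 hu0 hu1⟩
    have m3 : 0 ≤ cb3 σ * u ∧ cb3 σ * u ≤ 1 :=
      ⟨mul_nonneg hc3.1 hu0, mul_le_one₀ hc3.2 hu0 hu1⟩
    have m4 : 0 ≤ cb2 σ * u ^ 2 ∧ cb2 σ * u ^ 2 ≤ 1 :=
      ⟨mul_nonneg hc2.1 hu2', mul_le_one₀ hc2.2 hu2' hu2⟩
    have m5 : 0 ≤ cb3 σ * u ^ 2 ∧ cb3 σ * u ^ 2 ≤ 1 :=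
      ⟨mul_nonneg hc3.1 hu2', mul_le_one₀ hc3.2 hu2' hu2⟩
    have m6 : 0 ≤ cb3 σ * u ^ 3 ∧ cb3 σ * u ^ 3 ≤ 1 :=
      ⟨mul_nonneg hc3.1 hu3', mul_le_one₀ hc3.2 hu3' hu3⟩
    have i1 : F1 σ β ε (u * ε ^ 2) = β * ε ^ (2 * σ - 2 : ℝ) *
        (PA σ - 2 * (cb1 σ + 2 * cb2 σ + 3 * cb3 σ) * u
          + 3 * (cb2 σ + 3 * cb3 σ) * u ^ 2 - 4 * cb3 σ * u ^ 3) := by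
      rw [F1, if_neg hcase]
      simp only [P1, PB, PC, PD]
      field_simp
      ring
    have i2 : (u * ε ^ 2) * F2 σ β ε (u * ε ^ 2) = β * ε ^ (2 * σ - 2 : ℝ) *
        (-2 * (cb1 σ + 2 * cb2 σ + 3 * cb3 σ) * u
          + 6 * (cb2 σ + 3 * cb3 σ) * u ^ 2 - 12 * cb3 σ * u ^ 3) := by
      rw [F2, if_neg hcase]
      simp only [P2, PB, PC, PD]
      field_simp
      ring
    have i3 : (u * ε ^ 2) ^ 2 * F3 σ β ε (u * ε ^ 2) = β * ε ^ (2 * σ - 2 : ℝ) *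
        (6 * (cb2 σ + 3 * cb3 σ) * u ^ 2 - 24 * cb3 σ * u ^ 3) := by
      rw [F3, if_neg hcase]
      simp only [P3, PB, PC, PD]
      field_simp
      ring
    rw [i1, i2, i3]
    have habs : ∀ q : ℝ, |β * ε ^ (2 * σ - 2 : ℝ) * q| = |β| * ε ^ (2 * σ - 2 : ℝ) * |q| := by
      intro q; rw [abs_mul, abs_mul, abs_of_pos hE]
    rw [habs, habs, habs]
    have b1 : |PA σ - 2 * (cb1 σ + 2 * cb2 σ + 3 * cb3 σ) * u
        + 3 * (cb2 σ + 3 * cb3 σ) * u ^ 2 - 4 * cb3 σ * u ^ 3| ≤ 32 := by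
      rw [abs_le]; constructor <;> (simp only [PA]; linarith [m1.1, m1.2, m2.1, m2.2, m3.1,
        m3.2, m4.1, m4.2, m5.1, m5.2, m6.1, m6.2, hc1.1, hc1.2, hc2.1, hc2.2, hc3.1, hc3.2])
    have b2 : |-2 * (cb1 σ + 2 * cb2 σ + 3 * cb3 σ) * u
        + 6 * (cb2 σ + 3 * cb3 σ) * u ^ 2 - 12 * cb3 σ * u ^ 3| ≤ 48 := by
      rw [abs_le]; constructor <;> linarith [m1.1, m1.2, m2.1, m2.2, m3.1,
        m3.2, m4.1, m4.2, m5.1, m5.2, m6.1, m6.2]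
    have b3 : |6 * (cb2 σ + 3 * cb3 σ) * u ^ 2 - 24 * cb3 σ * u ^ 3| ≤ 48 := by
      rw [abs_le]; constructor <;> linarith [m4.1, m4.2, m5.1, m5.2, m6.1, m6.2]
    have hmono : ∀ q B : ℝ, |q| ≤ B → |β| * ε ^ (2 * σ - 2 : ℝ) * |q|
        ≤ |β| * ε ^ (2 * σ - 2 : ℝ) * B := by
      intro q B hqB
      exact mul_le_mul_of_nonneg_left hqB (by positivity)
    have := add_le_add (add_le_add (hmono _ _ b1) (hmono _ _ b2)) (hmono _ _ b3)
    refine le_trans this ?_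
    linarith [hE.le, mul_nonneg hb hE.le]

end Bound

/-- `|f_ε'(ρ)| + |ρ f_ε''(ρ)| + |ρ² f_ε'''(ρ)| ≤ C₃ / ε^{2-2σ}` for all `ρ ≥ 0`. -/
theorem stmt11 (σ β : ℝ) (hσ0 : 0 < σ) (hσ1 : σ < 1) :
    ∃ C₃ : ℝ, 0 < C₃ ∧ ∀ ε : ℝ, 0 < ε → ε < 1 → ∀ ρ : ℝ, 0 ≤ ρ →
      |deriv (freg σ β ε) ρ| + |ρ * iteratedDeriv 2 (freg σ β ε) ρ|
          + |ρ ^ 2 * iteratedDeriv 3 (freg σ β ε) ρ|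
        ≤ C₃ / ε ^ (2 - 2 * σ) := by
  refine ⟨128 * (|β| + 1), by positivity, ?_⟩
  intro ε hε hε1 ρ hρ
  have hdiv : (128 * (|β| + 1)) / ε ^ (2 - 2 * σ : ℝ)
      = 128 * (|β| + 1) * ε ^ (2 * σ - 2 : ℝ) := by
    rw [show (2 - 2 * σ : ℝ) = -(2 * σ - 2) by ring, Real.rpow_neg hε.le]; field_simp
  rw [deriv_freg hε, iteratedDeriv_two_freg hε, iteratedDeriv_three_freg hε, hdiv]
  exact main_bound hσ0 hσ1 hε ρ hρ
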